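/- Let G be a bipartite graph with bipartition (A, B) and let the set of guards be D = B. Then D is an eternal dominating set of G if and only if G admits a matching saturating A (i.e., a matching in which every vertex of A is matched). -/

import Mathlib

/-- `AttackerWinsIn G t D` : in the mobile domination game on `G` with guard set `D`,
Attacker has a strategy winning within `t` turns.  At each turn Attacker attacks an
unguarded vertex `v`; Defender must move a guard from some `u ∈ D ∩ N(v)` to `v`,
replacing the guard set by `(D ∪ {v}) \ {u}`; if `D ∩ N(v) = ∅` Attacker wins. -/
def AttackerWinsIn {V : Type*} [DecidableEq V] (G : SimpleGraph V) :
    ℕ → Finset V → Prop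
  | 0, _ => False
  | (t + 1), D => ∃ v, v ∉ D ∧
      ∀ u ∈ D, G.Adj u v → AttackerWinsIn G t (insert v (D.erase u))

/-- `t_G(D)` : the minimum number of turns in which Attacker can force a win,
`⊤` (i.e. `+∞`) if Defender can resist forever.  `D` is an eternal dominating set
exactly when `gameValue G D = ⊤`. -/
noncomputable def gameValue {V : Type*} [DecidableEq V] (G : SimpleGraph V)
    (D : Finset V) : ℕ∞ :=
  sInf {n : ℕ∞ | ∃ t : ℕ, n = (t : ℕ∞) ∧ AttackerWinsIn G t D}

lemma defender_safe {V : Type*} [DecidableEq V] (G : SimpleGraph V)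
    (P : Finset V → Prop)
    (hP : ∀ D, P D → ∀ v ∉ D, ∃ u ∈ D, G.Adj u v ∧ P (insert v (D.erase u))) :
    ∀ t D, P D → ¬ AttackerWinsIn G t D := by
  intro t
  induction t with
  | zero => intro D _ h; simp only [AttackerWinsIn] at h
  | succ t ih =>
    intro D hD h
    obtain ⟨v, hv, hall⟩ := h
    obtain ⟨u, hu, hadj, hP'⟩ := hP D hD v hv
    exact ih _ hP' (hall u hu hadj)

lemma attacker_wins {V : Type*} [DecidableEq V] (G : SimpleGraph V)
    (S N : Finset V)
    (hN : ∀ u v, v ∈ S → G.Adj u v → u ∈ N)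
    (hdisj : ∀ v ∈ S, v ∉ N) :
    ∀ m D, (D ∩ N).card = m → (D ∩ S).card + m < S.card →
      AttackerWinsIn G (m + 1) D := by
  intro m
  induction m with
  | zero =>
    intro D hm hlt
    obtain ⟨s, hsS, hsD⟩ : ∃ s ∈ S, s ∉ D := by
      by_contra h
      push_neg at h
      have hsub : S ⊆ D ∩ S := fun x hx => Finset.mem_inter.2 ⟨h x hx, hx⟩
      have := Finset.card_le_card hsub
      omega
    refine ⟨s, hsD, ?_⟩
    intro u hu hadj
    exfalso
    have huN := hN u s hsS hadj
    have hmem : u ∈ D ∩ N := Finset.mem_inter.2 ⟨hu, huN⟩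
    rw [Finset.card_eq_zero] at hm
    rw [hm] at hmem
    exact absurd hmem (Finset.notMem_empty u)
  | succ m ih =>
    intro D hm hlt
    obtain ⟨s, hsS, hsD⟩ : ∃ s ∈ S, s ∉ D := by
      by_contra h
      push_neg at h
      have hsub : S ⊆ D ∩ S := fun x hx => Finset.mem_inter.2 ⟨h x hx, hx⟩
      have := Finset.card_le_card hsub
      omega
    refine ⟨s, hsD, ?_⟩
    intro u hu hadj
    have huN := hN u s hsS hadj
    have huS : u ∉ S := fun h => hdisj u h huN
    have hsN : s ∉ N := hdisj s hsS
    have h1 : insert s (D.erase u) ∩ N = (D ∩ N).erase u := by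
      ext x
      simp only [Finset.mem_inter, Finset.mem_insert, Finset.mem_erase]
      constructor
      · rintro ⟨h | ⟨hxu, hxD⟩, hxN⟩
        · exact absurd (h ▸ hxN) hsN
        · exact ⟨hxu, hxD, hxN⟩
      · rintro ⟨hxu, hxD, hxN⟩
        exact ⟨Or.inr ⟨hxu, hxD⟩, hxN⟩
    have h2 : insert s (D.erase u) ∩ S = insert s (D ∩ S) := by
      ext x
      simp only [Finset.mem_inter, Finset.mem_insert, Finset.mem_erase]
      constructor
      · rintro ⟨h | ⟨hxu, hxD⟩, hxS⟩
        · exact Or.inl h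
        · exact Or.inr ⟨hxD, hxS⟩
      · rintro (h | ⟨hxD, hxS⟩)
        · exact ⟨Or.inl h, h ▸ hsS⟩
        · exact ⟨Or.inr ⟨fun he => huS (he ▸ hxS), hxD⟩, hxS⟩
    apply ih
    · rw [h1, Finset.card_erase_of_mem (Finset.mem_inter.2 ⟨hu, huN⟩), hm]
      omega
    · rw [h2, Finset.card_insert_of_notMem (fun h => hsD (Finset.mem_inter.1 h).1)]
      omega

/-- Let `G` be a bipartite graph with bipartition `(A, B)` and let the guard set be
`D = B`.  Then `D` is an eternal dominating set of `G` iff `G` admits a matching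
saturating `A`. -/
theorem stmt0 {V : Type*} [Fintype V] [DecidableEq V] (G : SimpleGraph V)
    (A B : Finset V)
    (hpart : ∀ v, v ∈ A ↔ v ∉ B)
    (hbip : ∀ u v, G.Adj u v → (u ∈ A ∧ v ∈ B) ∨ (u ∈ B ∧ v ∈ A)) :
    gameValue G B = ⊤ ↔
      ∃ M : G.Subgraph, M.IsMatching ∧ (A : Set V) ⊆ M.verts := by
  classical
  have hval : gameValue G B = ⊤ ↔ ∀ t, ¬ AttackerWinsIn G t B := by
    unfold gameValue
    rw [sInf_eq_top]
    constructor
    · intro h t ht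
      exact (ENat.coe_ne_top t) (h t ⟨t, rfl, ht⟩)
    · rintro h n ⟨t, rfl, ht⟩
      exact absurd ht (h t)
  rw [hval]
  constructor
  · -- forward: defender resists forever → matching exists
    intro h
    by_contra hno
    -- no injective f with f a adjacent to a
    have hnof : ¬ ∃ f : ↥A → V, Function.Injective f ∧
        ∀ a : ↥A, f a ∈ G.neighborFinset ↑a := by
      rintro ⟨f, hinj, hadj⟩
      have hfB : ∀ a : ↥A, f a ∈ B := by
        intro a
        have hAdj : G.Adj ↑a (f a) := by
          have := hadj a; rwa [SimpleGraph.mem_neighborFinset] at this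
        rcases hbip _ _ hAdj with ⟨_, hB⟩ | ⟨hB, _⟩
        · exact hB
        · exact absurd hB ((hpart ↑a).1 a.2)
      apply hno
      refine ⟨⟨(A : Set V) ∪ Set.range (fun a : ↥A => f a),
        fun u v => (∃ a : ↥A, u = ↑a ∧ v = f a) ∨ (∃ a : ↥A, v = ↑a ∧ u = f a),
        ?_, ?_, ?_⟩, ?_, ?_⟩
      · rintro u v (⟨a, rfl, rfl⟩ | ⟨a, rfl, rfl⟩)
        · have := hadj a; rwa [SimpleGraph.mem_neighborFinset] at this
        · have := hadj a; rw [SimpleGraph.mem_neighborFinset] at this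
          exact this.symm
      · rintro u v (⟨a, rfl, rfl⟩ | ⟨a, rfl, rfl⟩)
        · exact Or.inl a.2
        · exact Or.inr ⟨a, rfl⟩
      · constructor; rintro u v (⟨a, h1, h2⟩ | ⟨a, h1, h2⟩)
        · exact Or.inr ⟨a, h1, h2⟩
        · exact Or.inl ⟨a, h1, h2⟩
      · -- matching
        rintro v (hv | ⟨a, rfl⟩)
        · refine ⟨f ⟨v, hv⟩, Or.inl ⟨⟨v, hv⟩, rfl, rfl⟩, ?_⟩
          rintro w (⟨a, ha1, ha2⟩ | ⟨a, ha1, ha2⟩)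
          · subst ha2
            exact congrArg f (Subtype.ext ha1.symm : a = ⟨v, hv⟩)
          · exfalso
            subst ha1 ha2
            exact (hpart (f a)).1 hv (hfB a)
        · refine ⟨↑a, Or.inr ⟨a, rfl, rfl⟩, ?_⟩
          rintro w (⟨b, hb1, hb2⟩ | ⟨b, hb1, hb2⟩)
          · exfalso
            have hfa : f a = ↑b := hb1
            have hmem : (f a : V) ∈ A := by rw [hfa]; exact b.2
            exact (hpart (f a)).1 hmem (hfB a)
          · subst hb1
            exact congrArg Subtype.val (hinj hb2.symm)
      · exact fun v hv => Or.inl hv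
    -- Hall fails
    have hhall := (Finset.all_card_le_biUnion_card_iff_exists_injective
      (fun a : ↥A => G.neighborFinset ↑a)).not.2 hnof
    push_neg at hhall
    obtain ⟨s, hs⟩ := hhall
    set S : Finset V := s.image Subtype.val with hSdef
    set N : Finset V := s.biUnion (fun a => G.neighborFinset ↑a) with hNdef
    have hScard : S.card = s.card := Finset.card_image_of_injective _ Subtype.val_injective
    have hSA : ∀ x ∈ S, x ∈ A := by
      intro x hx
      obtain ⟨a, _, rfl⟩ := Finset.mem_image.1 hx
      exact a.2
    have hNmem : ∀ u v, v ∈ S → G.Adj u v → u ∈ N := by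
      intro u v hv hadj
      obtain ⟨a, ha, rfl⟩ := Finset.mem_image.1 hv
      exact Finset.mem_biUnion.2 ⟨a, ha, (SimpleGraph.mem_neighborFinset _ _ _).2 hadj.symm⟩
    have hdisj : ∀ v ∈ S, v ∉ N := by
      intro v hv hvN
      obtain ⟨a, _, ha2⟩ := Finset.mem_biUnion.1 hvN
      rw [SimpleGraph.mem_neighborFinset] at ha2
      rcases hbip _ _ ha2 with ⟨_, hB⟩ | ⟨hB, _⟩
      · exact (hpart v).1 (hSA v hv) hB
      · exact (hpart ↑a).1 a.2 hB
    have hBS : B ∩ S = ∅ := by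
      rw [Finset.eq_empty_iff_forall_notMem]
      intro x hx
      rcases Finset.mem_inter.1 hx with ⟨hxB, hxS⟩
      exact (hpart x).1 (hSA x hxS) hxB
    have hwin := attacker_wins G S N hNmem hdisj (B ∩ N).card B rfl ?_
    · exact h _ hwin
    · rw [hBS]
      simp only [Finset.card_empty, zero_add]
      calc (B ∩ N).card ≤ N.card := Finset.card_le_card Finset.inter_subset_right
        _ < s.card := hs
        _ = S.card := hScard.symm
  · -- backward: matching → defender resists forever
    rintro ⟨M, hM, hsub⟩ t
    -- extract partner function
    have hf : ∀ a : ↥A, ∃ w, M.Adj ↑a w := by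
      intro a
      obtain ⟨w, hw, _⟩ := hM (hsub a.2)
      exact ⟨w, hw⟩
    choose f hfadj using hf
    have hGadj : ∀ a : ↥A, G.Adj ↑a (f a) := fun a => M.adj_sub (hfadj a)
    have hfB : ∀ a : ↥A, f a ∈ B := by
      intro a
      rcases hbip _ _ (hGadj a) with ⟨_, hB⟩ | ⟨hB, _⟩
      · exact hB
      · exact absurd hB ((hpart ↑a).1 a.2)
    have hinj : Function.Injective f := by
      intro a b hab
      have h1 : M.Adj (f a) ↑a := (hfadj a).symm
      have h2 : M.Adj (f a) ↑b := hab ▸ (hfadj b).symm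
      obtain ⟨w, _, huniq⟩ := hM (M.edge_vert h1)
      exact Subtype.ext ((huniq _ h1).trans (huniq _ h2).symm)
    set P : Finset V → Prop :=
      fun D => ∃ S : Finset ↥A, D = (B \ S.image f) ∪ S.image Subtype.val with hPdef
    have hAB : ∀ a : ↥A, (a : V) ∉ B := fun a => (hpart ↑a).1 a.2
    apply defender_safe G P _ t B ⟨∅, by simp⟩
    intro D hD v hv
    obtain ⟨S, rfl⟩ := hD
    by_cases hvB : v ∈ B
    · -- v ∈ B, so v = f a for some a ∈ S
      have hvSf : v ∈ S.image f := by
        by_contra hvf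
        exact hv (Finset.mem_union_left _ (Finset.mem_sdiff.2 ⟨hvB, hvf⟩))
      obtain ⟨a, haS, rfl⟩ := Finset.mem_image.1 hvSf
      refine ⟨↑a, Finset.mem_union_right _ (Finset.mem_image.2 ⟨a, haS, rfl⟩),
        (hGadj a), ⟨S.erase a, ?_⟩⟩
      ext x
      simp only [Finset.mem_insert, Finset.mem_erase, Finset.mem_union,
        Finset.mem_sdiff, Finset.mem_image]
      constructor
      · rintro (rfl | ⟨hxa, (⟨hxB, hxf⟩ | ⟨b, hbS, rfl⟩)⟩)
        · exact Or.inl ⟨hfB a, fun ⟨b, hb, hfb⟩ => hb.1 (hinj hfb)⟩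
        · refine Or.inl ⟨hxB, fun ⟨b, hb, hfb⟩ => hxf ⟨b, hb.2, hfb⟩⟩
        · refine Or.inr ⟨b, ⟨fun hba => hxa (congrArg Subtype.val hba), hbS⟩, rfl⟩
      · rintro (⟨hxB, hxf⟩ | ⟨b, ⟨hba, hbS⟩, rfl⟩)
        · by_cases hxfa : x = f a
          · exact Or.inl hxfa
          · refine Or.inr ⟨?_, Or.inl ⟨hxB, fun ⟨b, hbS, hfb⟩ => ?_⟩⟩
            · rintro rfl; exact hAB a hxB
            · by_cases hba : b = a
              · exact hxfa (hba ▸ hfb.symm)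
              · exact hxf ⟨b, ⟨hba, hbS⟩, hfb⟩
        · refine Or.inr ⟨fun h => hba (Subtype.ext h), Or.inr ⟨b, hbS, rfl⟩⟩
    · -- v ∈ A
      have hvA : v ∈ A := (hpart v).2 hvB
      set a : ↥A := ⟨v, hvA⟩ with hadef
      have haS : a ∉ S := by
        intro haS
        exact hv (Finset.mem_union_right _ (Finset.mem_image.2 ⟨a, haS, rfl⟩))
      have hfaD : f a ∈ (B \ S.image f) ∪ S.image Subtype.val := by
        apply Finset.mem_union_left
        refine Finset.mem_sdiff.2 ⟨hfB a, ?_⟩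
        rintro hmem
        obtain ⟨b, hbS, hfb⟩ := Finset.mem_image.1 hmem
        exact haS (hinj hfb ▸ hbS)
      refine ⟨f a, hfaD, (hGadj a).symm, ⟨insert a S, ?_⟩⟩
      ext x
      simp only [Finset.mem_insert, Finset.mem_erase, Finset.mem_union,
        Finset.mem_sdiff, Finset.mem_image]
      constructor
      · rintro (rfl | ⟨hxfa, (⟨hxB, hxf⟩ | ⟨b, hbS, rfl⟩)⟩)
        · exact Or.inr ⟨a, Or.inl rfl, rfl⟩
        · refine Or.inl ⟨hxB, ?_⟩
          rintro ⟨b, hbS, rfl⟩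
          rcases hbS with rfl | hbS
          · exact hxfa rfl
          · exact hxf ⟨b, hbS, rfl⟩
        · exact Or.inr ⟨b, Or.inr hbS, rfl⟩
      · rintro (⟨hxB, hxf⟩ | ⟨b, hbS, rfl⟩)
        · refine Or.inr ⟨fun h => hxf ⟨a, Or.inl rfl, h.symm⟩,
            Or.inl ⟨hxB, fun ⟨b, hbS, hfb⟩ => hxf ⟨b, Or.inr hbS, hfb⟩⟩⟩
        · rcases hbS with rfl | hbS
          · exact Or.inl rfl
          · refine Or.inr ⟨?_, Or.inr ⟨b, hbS, rfl⟩⟩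
            intro h
            exact hAB b (h ▸ hfB a)
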